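/- Doubly-exponential lower bound for upward interiors of NFAs: for every n ≥ 7, let ℓ = ⌊(n−4)/3⌋, let Γ = {0,1,…,2^ℓ−1} and Υ = {1,…,ℓ} be disjoint alphabets and Σ = Γ ∪ Υ. For x,y ∈ Γ and k ∈ Υ write x =_k y when x and y, viewed as ℓ-bit sequences, have the same k-th bit. Let L'_n = {x w y k w' ∈ Γ·Σ*·Γ·Υ·Σ* | x =_k y}, L''_n = Γ·(Γ·Υ)*, and L_n = L'_n ∪ (Σ* \ L''_n). Then nN(L_n) ≤ n and nN(↑int L_n) ≥ 2^{2^ℓ} + 1 = 2^{2^{⌊(n−4)/3⌋}} + 1. -/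

import Mathlib

/-- An accepting run of an NFA on a word `w`: a sequence of `|w|+1` states starting
in an initial state, ending in an accepting state, and following the transitions. -/
def NFA.IsAcceptingRun {α σ : Type*} (M : NFA α σ) (w : List α)
    (r : Fin (w.length + 1) → σ) : Prop :=
  r 0 ∈ M.start ∧ r (Fin.last w.length) ∈ M.accept ∧
    ∀ i : Fin w.length, r i.succ ∈ M.step (r i.castSucc) (w.get i)

/-- An NFA is unambiguous (a UFA) if every word has at most one accepting run. -/
def NFA.Unambiguous {α σ : Type*} (M : NFA α σ) : Prop :=
  ∀ (w : List α) (r₁ r₂ : Fin (w.length + 1) → σ),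
    M.IsAcceptingRun w r₁ → M.IsAcceptingRun w r₂ → r₁ = r₂

/-- A deterministic NFA (a DFA with a possibly partial transition function):
exactly one initial state and at most one successor per state and letter. -/
def NFA.Deterministic {α σ : Type*} (M : NFA α σ) : Prop :=
  (∃ q₀, M.start = {q₀}) ∧ ∀ q a, (M.step q a).Subsingleton

/-- Minimal number of states of an NFA recognizing `L` (`nN(L)`). -/
noncomputable def nN {α : Type} (L : Language α) : ℕ :=
  sInf {n | ∃ (σ : Type) (inst : Fintype σ) (M : NFA α σ),
    @Fintype.card σ inst = n ∧ M.accepts = L}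

/-- Minimal number of states of a DFA (partial transition function allowed)
recognizing `L` (`nD(L)`). -/
noncomputable def nD {α : Type} (L : Language α) : ℕ :=
  sInf {n | ∃ (σ : Type) (inst : Fintype σ) (M : NFA α σ),
    M.Deterministic ∧ @Fintype.card σ inst = n ∧ M.accepts = L}

/-- Minimal number of states of an unambiguous NFA recognizing `L` (`nU(L)`). -/
noncomputable def nU {α : Type} (L : Language α) : ℕ :=
  sInf {n | ∃ (σ : Type) (inst : Fintype σ) (M : NFA α σ),
    M.Unambiguous ∧ @Fintype.card σ inst = n ∧ M.accepts = L}

/-- Upward closure: all superwords (w.r.t. the scattered-subword ordering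
`List.Sublist`) of words of `L`. -/
def upClosure {α : Type} (L : Language α) : Language α := {x | ∃ y ∈ L, y.Sublist x}

/-- Downward closure: all subwords of words of `L`. -/
def downClosure {α : Type} (L : Language α) : Language α := {x | ∃ y ∈ L, x.Sublist y}

/-- Upward interior: words all of whose superwords are in `L`. -/
def upInterior {α : Type} (L : Language α) : Language α := {x | ∀ y, x.Sublist y → y ∈ L}

/-- Downward interior: words all of whose subwords are in `L`. -/
def downInterior {α : Type} (L : Language α) : Language α := {x | ∀ y, y.Sublist x → y ∈ L}

namespace UIDE

theorem evalFrom_app {α σ : Type*} (M : NFA α σ) (S : Set σ) (x y : List α) :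
    M.evalFrom S (x ++ y) = M.evalFrom (M.evalFrom S x) y := by
  simp [NFA.evalFrom, List.foldl_append]

theorem stepSet_mono {α σ : Type*} (M : NFA α σ) {S T : Set σ} (h : S ⊆ T) (a : α) :
    M.stepSet S a ⊆ M.stepSet T a := by
  intro s hs
  rw [NFA.mem_stepSet] at *
  obtain ⟨t, ht, h2⟩ := hs
  exact ⟨t, h ht, h2⟩

theorem evalFrom_mono {α σ : Type*} (M : NFA α σ) {S T : Set σ} (h : S ⊆ T) (x : List α) :
    M.evalFrom S x ⊆ M.evalFrom T x := by
  induction x generalizing S T with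
  | nil => exact h
  | cons a x ih =>
    show M.evalFrom (M.stepSet S a) x ⊆ M.evalFrom (M.stepSet T a) x
    exact ih (stepSet_mono M h a)

theorem evalFrom_split {α σ : Type*} (M : NFA α σ) {S : Set σ} {x : List α} {q : σ}
    (h : q ∈ M.evalFrom S x) : ∃ p ∈ S, q ∈ M.evalFrom {p} x := by
  induction x generalizing S with
  | nil => exact ⟨q, h, rfl⟩
  | cons a x ih =>
    obtain ⟨r, hr, h2⟩ := ih (S := M.stepSet S a) h
    rw [NFA.mem_stepSet] at hr
    obtain ⟨p, hp, hstep⟩ := hr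
    refine ⟨p, hp, ?_⟩
    show q ∈ M.evalFrom (M.stepSet {p} a) x
    refine evalFrom_mono M ?_ x h2
    intro s hs
    rw [Set.mem_singleton_iff] at hs
    subst hs
    rw [NFA.mem_stepSet]
    exact ⟨p, rfl, hstep⟩

/-- Extended fooling set lower bound for NFAs. -/
theorem fooling {α σ I : Type*} [Fintype σ] [Fintype I] (M : NFA α σ)
    (x y : I → List α)
    (hmem : ∀ i, x i ++ y i ∈ M.accepts)
    (hcross : ∀ i j, i ≠ j → x i ++ y j ∉ M.accepts ∨ x j ++ y i ∉ M.accepts) :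
    Fintype.card I ≤ Fintype.card σ := by
  have key : ∀ i : I, ∃ q : σ, q ∈ M.eval (x i) ∧ ∃ f ∈ M.accept, f ∈ M.evalFrom {q} (y i) := by
    intro i
    obtain ⟨f, hf, hev⟩ := hmem i
    rw [show M.eval (x i ++ y i) = M.evalFrom (M.eval (x i)) (y i) from evalFrom_app ..] at hev
    obtain ⟨q, hq, h2⟩ := evalFrom_split M hev
    exact ⟨q, hq, f, hf, h2⟩
  choose q hq hacc using key
  have hinj : Function.Injective q := by
    intro i j hij
    by_contra hne
    have acc : ∀ a b : I, q a = q b → x a ++ y b ∈ M.accepts := by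
      intro a b hab
      obtain ⟨f, hf, hev⟩ := hacc b
      refine ⟨f, hf, ?_⟩
      rw [show M.eval (x a ++ y b) = M.evalFrom (M.eval (x a)) (y b) from evalFrom_app ..]
      refine evalFrom_mono M ?_ (y b) (hab ▸ hev)
      intro s hs; rw [Set.mem_singleton_iff] at hs; subst hs; exact hq a
    rcases hcross i j hne with h | h
    · exact h (acc i j hij)
    · exact h (acc j i hij.symm)
  exact Fintype.card_le_of_injective q hinj

end UIDE

namespace UIDE

variable {ℓ : ℕ}

abbrev Al (ℓ : ℕ) := Fin (2 ^ ℓ) ⊕ Fin ℓ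

def pairF (p : Fin (2 ^ ℓ) × Fin ℓ) : List (Al ℓ) := [Sum.inl p.1, Sum.inr p.2]

def Lp (ℓ : ℕ) : Language (Al ℓ) :=
  {w | ∃ (x y : Fin (2 ^ ℓ)) (k : Fin ℓ) (w₁ w₂ : List (Al ℓ)),
      w = Sum.inl x :: (w₁ ++ [Sum.inl y, Sum.inr k] ++ w₂) ∧
      Nat.testBit x.val k.val = Nat.testBit y.val k.val}

def Lpp (ℓ : ℕ) : Language (Al ℓ) :=
  {w | ∃ (x : Fin (2 ^ ℓ)) (ps : List (Fin (2 ^ ℓ) × Fin ℓ)), w = Sum.inl x :: ps.flatMap pairF}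

def LL (ℓ : ℕ) : Language (Al ℓ) := {w | w ∈ Lp ℓ ∨ w ∉ Lpp ℓ}

def MInt (ℓ : ℕ) : Language (Al ℓ) :=
  {w | ∃ c w', w = c :: w' ∧ ∀ z : Fin (2 ^ ℓ), Sum.inl z ∈ w'}

theorem MInt_subset_upInterior {w : List (Al ℓ)} (hw : w ∈ MInt ℓ) : w ∈ upInterior (LL ℓ) := by
  obtain ⟨c, w', rfl, hall⟩ := hw
  intro v hsub
  by_cases hv : v ∈ Lpp ℓ
  · left
    obtain ⟨x, ps, rfl⟩ := hv
    have hw' : w'.Sublist (ps.flatMap pairF) := by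
      cases hsub with
      | cons _ h => exact ((List.sublist_cons_self c w').trans h)
      | cons_cons _ h => exact h
    have hx : Sum.inl x ∈ ps.flatMap pairF := hw'.subset (hall x)
    rw [List.mem_flatMap] at hx
    obtain ⟨p, hp, hmem⟩ := hx
    have hx1 : p.1 = x := by
      simp only [pairF, List.mem_cons, List.mem_singleton] at hmem
      rcases hmem with h | h | h
      · exact (Sum.inl.injEq .. ▸ h.symm : _)
      · exact absurd h (by simp)
      · simp at h
    obtain ⟨s, t, rfl⟩ := List.append_of_mem hp
    refine ⟨x, x, p.2, s.flatMap pairF, t.flatMap pairF, ?_, rfl⟩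
    subst hx1
    simp [pairF, List.flatMap_append]
  · right; exact hv

end UIDE

namespace UIDE
variable {ℓ : ℕ}

noncomputable def diffbit (hl : 0 < ℓ) (z a : Fin (2 ^ ℓ)) : Fin ℓ :=
  if h : ∃ j : Fin ℓ, a.val.testBit j.val ≠ z.val.testBit j.val then h.choose else ⟨0, hl⟩

theorem diffbit_spec (hl : 0 < ℓ) {z a : Fin (2 ^ ℓ)} (hne : a ≠ z) :
    a.val.testBit (diffbit hl z a).val ≠ z.val.testBit (diffbit hl z a).val := by
  have h : ∃ j : Fin ℓ, a.val.testBit j.val ≠ z.val.testBit j.val := by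
    by_contra hc
    push_neg at hc
    apply hne
    apply Fin.val_injective
    apply Nat.eq_of_testBit_eq
    intro j
    by_cases hj : j < ℓ
    · exact hc ⟨j, hj⟩
    · rw [Nat.testBit_lt_two_pow, Nat.testBit_lt_two_pow]
      · exact lt_of_lt_of_le z.isLt (Nat.pow_le_pow_right (by norm_num) (le_of_not_gt hj))
      · exact lt_of_lt_of_le a.isLt (Nat.pow_le_pow_right (by norm_num) (le_of_not_gt hj))
  rw [diffbit, dif_pos h]
  exact h.choose_spec

def flipbit (z : Fin (2 ^ ℓ)) (k : Fin ℓ) : Fin (2 ^ ℓ) :=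
  ⟨z.val ^^^ 2 ^ k.val, Nat.xor_lt_two_pow z.isLt (Nat.pow_lt_pow_right one_lt_two k.isLt)⟩

theorem flipbit_spec (z : Fin (2 ^ ℓ)) (k : Fin ℓ) :
    (flipbit z k).val.testBit k.val ≠ z.val.testBit k.val := by
  simp [flipbit, Nat.testBit_xor, Nat.testBit_two_pow_self]

noncomputable def encL (hl : 0 < ℓ) (z : Fin (2 ^ ℓ)) : Al ℓ → Fin (2 ^ ℓ) × Fin ℓ
  | Sum.inl a => (a, diffbit hl z a)
  | Sum.inr k => (flipbit z k, k)

noncomputable def enc (hl : 0 < ℓ) (z : Fin (2 ^ ℓ)) (u : List (Al ℓ)) : List (Al ℓ) :=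
  (u.map (encL hl z)).flatMap pairF

theorem enc_sublist (hl : 0 < ℓ) (z : Fin (2 ^ ℓ)) (u : List (Al ℓ)) :
    u.Sublist (enc hl z u) := by
  induction u with
  | nil => simp [enc]
  | cons c u ih =>
    have : enc hl z (c :: u) = pairF (encL hl z c) ++ enc hl z u := by
      simp [enc]
    rw [this, show c :: u = [c] ++ u from rfl]
    refine List.Sublist.append ?_ ih
    cases c <;> simp [pairF, encL]

theorem enc_Lpp (hl : 0 < ℓ) (z : Fin (2 ^ ℓ)) (u : List (Al ℓ)) :
    Sum.inl z :: enc hl z u ∈ Lpp ℓ :=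
  ⟨z, u.map (encL hl z), rfl⟩

theorem pair_of_flatMap {ps : List (Fin (2 ^ ℓ) × Fin ℓ)} {w₁ w₂ : List (Al ℓ)}
    {y : Fin (2 ^ ℓ)} {k : Fin ℓ}
    (h : ps.flatMap pairF = w₁ ++ Sum.inl y :: Sum.inr k :: w₂) : (y, k) ∈ ps := by
  induction ps generalizing w₁ with
  | nil =>
    exfalso
    cases w₁ <;> simp at h
  | cons p ps ih =>
    have h' : Sum.inl p.1 :: Sum.inr p.2 :: ps.flatMap pairF
        = w₁ ++ Sum.inl y :: Sum.inr k :: w₂ := by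
      simpa [pairF] using h
    match w₁, h' with
    | [], h' =>
      simp only [List.nil_append, List.cons.injEq] at h'
      obtain ⟨h1, h2, -⟩ := h'
      cases h1; cases h2
      exact List.mem_cons_self ..
    | [d], h' =>
      simp only [List.cons_append, List.nil_append, List.cons.injEq] at h'
      exact absurd h'.2.1 (by simp)
    | d1 :: d2 :: w₁, h' =>
      simp only [List.cons_append, List.cons.injEq] at h'
      exact List.mem_cons_of_mem _ (ih h'.2.2)

theorem enc_not_Lp (hl : 0 < ℓ) {z : Fin (2 ^ ℓ)} {u : List (Al ℓ)}
    (hz : Sum.inl z ∉ u) : (Sum.inl z :: enc hl z u) ∉ Lp ℓ := by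
  rintro ⟨x, y, k, w₁, w₂, heq, htest⟩
  rw [List.cons.injEq] at heq
  obtain ⟨hx, henc⟩ := heq
  cases hx
  have henc' : (u.map (encL hl z)).flatMap pairF = w₁ ++ Sum.inl y :: Sum.inr k :: w₂ := by
    simpa [enc] using henc
  have hmem := pair_of_flatMap henc'
  rw [List.mem_map] at hmem
  obtain ⟨c, hc, hcenc⟩ := hmem
  cases c with
  | inl a =>
    have ha : a ≠ z := fun h => hz (h ▸ hc)
    rw [encL] at hcenc
    have h1 : a = y := congrArg Prod.fst hcenc
    have h2 : diffbit hl z a = k := congrArg Prod.snd hcenc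
    subst h1; subst h2
    exact diffbit_spec hl ha htest.symm
  | inr k' =>
    rw [encL] at hcenc
    have h1 : flipbit z k' = y := congrArg Prod.fst hcenc
    have h2 : k' = k := congrArg Prod.snd hcenc
    subst h1
    exact flipbit_spec z k (h2 ▸ htest.symm)

theorem upInterior_subset_MInt (hl : 0 < ℓ) {w : List (Al ℓ)}
    (hw : w ∈ upInterior (LL ℓ)) : w ∈ MInt ℓ := by
  by_contra hnot
  cases w with
  | nil =>
    have z0 : Fin (2 ^ ℓ) := ⟨0, Nat.two_pow_pos ℓ⟩
    have hv := hw [Sum.inl z0] (List.nil_sublist _)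
    rcases hv with hv | hv
    · obtain ⟨x, y, k, w₁, w₂, heq, -⟩ := hv
      simpa using congrArg List.length heq
    · exact hv ⟨z0, [], rfl⟩
  | cons c w' =>
    have hz : ∃ z : Fin (2 ^ ℓ), Sum.inl z ∉ w' := by
      by_contra hc
      push_neg at hc
      exact hnot ⟨c, w', rfl, hc⟩
    obtain ⟨z, hz⟩ := hz
    by_cases hc : c = Sum.inl z
    · subst hc
      have hv := hw (Sum.inl z :: enc hl z w') ((enc_sublist hl z w').cons₂ _)
      rcases hv with hv | hv
      · exact enc_not_Lp hl hz hv
      · exact hv (enc_Lpp hl z w')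
    · have hz' : Sum.inl z ∉ c :: w' := by
        rw [List.mem_cons]
        rintro (h | h)
        · exact hc h.symm
        · exact hz h
      have hv := hw (Sum.inl z :: enc hl z (c :: w'))
        ((enc_sublist hl z (c :: w')).cons _)
      rcases hv with hv | hv
      · exact enc_not_Lp hl hz' hv
      · exact hv (enc_Lpp hl z (c :: w'))

theorem upInterior_LL (hl : 0 < ℓ) : upInterior (LL ℓ) = MInt ℓ := by
  ext w
  exact ⟨upInterior_subset_MInt hl, MInt_subset_upInterior⟩

end UIDE

namespace UIDE
variable {ℓ : ℕ}

theorem stepSet_singleton {α σ : Type*} (M : NFA α σ) (q : σ) (a : α) :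
    M.stepSet {q} a = M.step q a := by
  simp [NFA.stepSet]

/-- The canonical NFA recognizing `MInt ℓ`, with `2 ^ 2 ^ ℓ + 1` states. -/
def M2 (ℓ : ℕ) : NFA (Al ℓ) (Option (Finset (Fin (2 ^ ℓ)))) where
  step q a :=
    match q, a with
    | none, _ => {some Finset.univ}
    | some S, Sum.inl x => {some (S.erase x)}
    | some S, Sum.inr _ => {some S}
  start := {none}
  accept := {some ∅}

def gam : List (Al ℓ) → Finset (Fin (2 ^ ℓ)) → Finset (Fin (2 ^ ℓ))
  | [], S => S
  | Sum.inl x :: w, S => gam w (S.erase x)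
  | Sum.inr _ :: w, S => gam w S

theorem mem_gam (w : List (Al ℓ)) (S : Finset (Fin (2 ^ ℓ))) (z : Fin (2 ^ ℓ)) :
    z ∈ gam w S ↔ z ∈ S ∧ Sum.inl z ∉ w := by
  induction w generalizing S with
  | nil => simp [gam]
  | cons c w ih =>
    cases c with
    | inl x =>
      rw [gam, ih]
      simp only [Finset.mem_erase, List.mem_cons]
      constructor
      · rintro ⟨⟨h1, h2⟩, h3⟩
        refine ⟨h2, ?_⟩
        rintro (h | h)
        · exact h1 (by injection h)
        · exact h3 h
      · rintro ⟨h1, h2⟩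
        exact ⟨⟨fun h => h2 (Or.inl (by rw [h])), h1⟩, fun h => h2 (Or.inr h)⟩
    | inr k =>
      rw [gam, ih]
      simp only [List.mem_cons]
      constructor
      · rintro ⟨h1, h2⟩
        refine ⟨h1, ?_⟩
        rintro (h | h)
        · exact absurd h (by simp)
        · exact h2 h
      · rintro ⟨h1, h2⟩
        exact ⟨h1, fun h => h2 (Or.inr h)⟩

theorem M2_evalFrom (w : List (Al ℓ)) (S : Finset (Fin (2 ^ ℓ))) :
    (M2 ℓ).evalFrom {some S} w = {some (gam w S)} := by
  induction w generalizing S with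
  | nil => simp [gam]
  | cons c w ih =>
    show (M2 ℓ).evalFrom ((M2 ℓ).stepSet {some S} c) w = _
    rw [stepSet_singleton]
    cases c with
    | inl x => rw [show (M2 ℓ).step (some S) (Sum.inl x) = {some (S.erase x)} from rfl, ih, gam]
    | inr k => rw [show (M2 ℓ).step (some S) (Sum.inr k) = {some S} from rfl, ih, gam]

theorem M2_accepts : (M2 ℓ).accepts = MInt ℓ := by
  ext w
  rw [NFA.mem_accepts]
  cases w with
  | nil =>
    simp only [NFA.evalFrom_nil]
    constructor
    · rintro ⟨q, hq, hq2⟩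
      rw [show (M2 ℓ).accept = {some ∅} from rfl, Set.mem_singleton_iff] at hq
      rw [show (M2 ℓ).start = {none} from rfl, Set.mem_singleton_iff] at hq2
      subst hq; exact absurd hq2 (by simp)
    · rintro ⟨c, w', h, -⟩; exact absurd h (by simp)
  | cons c w' =>
    have : (M2 ℓ).evalFrom (M2 ℓ).start (c :: w')
        = (M2 ℓ).evalFrom ((M2 ℓ).stepSet {none} c) w' := rfl
    rw [this, stepSet_singleton,
      show (M2 ℓ).step none c = {some Finset.univ} from rfl, M2_evalFrom]
    constructor
    · rintro ⟨q, hq, hq2⟩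
      rw [show (M2 ℓ).accept = {some ∅} from rfl, Set.mem_singleton_iff] at hq
      rw [Set.mem_singleton_iff] at hq2
      subst hq
      refine ⟨c, w', rfl, fun z => ?_⟩
      by_contra hz
      have h0 : (∅ : Finset (Fin (2 ^ ℓ))) = gam w' Finset.univ := Option.some_injective _ hq2
      have : z ∈ gam w' Finset.univ := (mem_gam ..).2 ⟨Finset.mem_univ z, hz⟩
      rw [← h0] at this
      simp at this
    · rintro ⟨c', w'', heq, hall⟩
      rw [List.cons.injEq] at heq
      obtain ⟨rfl, rfl⟩ := heq
      refine ⟨some (gam w' Finset.univ), ?_, rfl⟩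
      rw [show (M2 ℓ).accept = {some ∅} from rfl, Set.mem_singleton_iff]
      congr 1
      rw [Finset.eq_empty_iff_forall_notMem]
      intro z hz
      rw [mem_gam] at hz
      exact hz.2 (hall z)

theorem card_M2_states : Fintype.card (Option (Finset (Fin (2 ^ ℓ)))) = 2 ^ 2 ^ ℓ + 1 := by
  simp [Fintype.card_option, Fintype.card_finset, Fintype.card_fin]

end UIDE

namespace UIDE
variable {ℓ : ℕ}

theorem map_toList_not_MInt (T : Finset (Fin (2 ^ ℓ))) :
    (T.toList.map Sum.inl : List (Al ℓ)) ∉ MInt ℓ := by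
  rintro ⟨c, w', heq, hall⟩
  rcases h : T.toList with _ | ⟨a, t⟩
  · rw [h] at heq; exact absurd heq (by simp)
  · rw [h] at heq
    simp only [List.map_cons, List.cons.injEq] at heq
    obtain ⟨rfl, rfl⟩ := heq
    have := hall a
    rw [List.mem_map] at this
    obtain ⟨b, hb, hba⟩ := this
    have : b = a := by injection hba
    subst this
    have hnd := T.nodup_toList
    rw [h] at hnd
    exact (List.nodup_cons.1 hnd).1 hb

/-- abbreviated names for fooling words -/
noncomputable def fx (ℓ : ℕ) : Option (Finset (Fin (2 ^ ℓ))) → List (Al ℓ)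
  | none => []
  | some S => Sum.inl ⟨0, Nat.two_pow_pos ℓ⟩ :: S.toList.map Sum.inl

noncomputable def fy (ℓ : ℕ) : Option (Finset (Fin (2 ^ ℓ))) → List (Al ℓ)
  | none => Sum.inl ⟨0, Nat.two_pow_pos ℓ⟩ :: Finset.univ.toList.map Sum.inl
  | some S => Sᶜ.toList.map Sum.inl

theorem fxy_mem (i : Option (Finset (Fin (2 ^ ℓ)))) : fx ℓ i ++ fy ℓ i ∈ MInt ℓ := by
  cases i with
  | none =>
    refine ⟨_, _, rfl, fun z => ?_⟩
    simp [Finset.mem_toList]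
  | some S =>
    refine ⟨Sum.inl ⟨0, Nat.two_pow_pos ℓ⟩, S.toList.map Sum.inl ++ Sᶜ.toList.map Sum.inl, by simp [fx, fy], fun z => ?_⟩
    rw [List.mem_append, List.mem_map, List.mem_map]
    by_cases hz : z ∈ S
    · exact Or.inl ⟨z, Finset.mem_toList.2 hz, rfl⟩
    · exact Or.inr ⟨z, Finset.mem_toList.2 (Finset.mem_compl.2 hz), rfl⟩

theorem cross_not_mem {S T : Finset (Fin (2 ^ ℓ))} {z : Fin (2 ^ ℓ)}
    (hzS : z ∈ S) (hzT : z ∉ T) : fx ℓ (some T) ++ fy ℓ (some S) ∉ MInt ℓ := by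
  rintro ⟨c, w', heq, hall⟩
  have heq' : Sum.inl (⟨0, Nat.two_pow_pos ℓ⟩ : Fin (2 ^ ℓ)) ::
      (T.toList.map Sum.inl ++ Sᶜ.toList.map Sum.inl) = c :: w' := by
    simpa [fx, fy] using heq
  rw [List.cons.injEq] at heq'
  obtain ⟨-, rfl⟩ := heq'
  have := hall z
  rw [List.mem_append, List.mem_map, List.mem_map] at this
  rcases this with ⟨b, hb, hbz⟩ | ⟨b, hb, hbz⟩ <;> (have hb' : b = z := by injection hbz) <;> subst hb'
  · exact hzT (Finset.mem_toList.1 hb)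
  · exact (Finset.mem_compl.1 (Finset.mem_toList.1 hb)) hzS

theorem lower_bound {σ : Type} [Fintype σ] (M : NFA (Al ℓ) σ)
    (hM : M.accepts = MInt ℓ) : 2 ^ 2 ^ ℓ + 1 ≤ Fintype.card σ := by
  have := fooling (I := Option (Finset (Fin (2 ^ ℓ)))) M (fx ℓ) (fy ℓ)
    (fun i => by rw [hM]; exact fxy_mem i)
    (fun i j hij => by
      rw [hM]
      cases i with
      | none =>
        cases j with
        | none => exact absurd rfl hij
        | some S =>
          left
          show ([] : List (Al ℓ)) ++ fy ℓ (some S) ∉ MInt ℓ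
          rw [List.nil_append]
          exact map_toList_not_MInt Sᶜ
      | some S =>
        cases j with
        | none =>
          right
          show ([] : List (Al ℓ)) ++ fy ℓ (some S) ∉ MInt ℓ
          rw [List.nil_append]
          exact map_toList_not_MInt Sᶜ
        | some T =>
          have hST : S ≠ T := fun h => hij (by rw [h])
          have : (∃ z, z ∈ S ∧ z ∉ T) ∨ ∃ z, z ∈ T ∧ z ∉ S := by
            by_contra hc
            push_neg at hc
            exact hST (Finset.ext fun z => ⟨fun h => hc.1 z h, fun h => hc.2 z h⟩)
          rcases this with ⟨z, h1, h2⟩ | ⟨z, h1, h2⟩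
          · right; exact cross_not_mem h1 h2
          · left; exact cross_not_mem h1 h2)
  rwa [card_M2_states] at this

end UIDE

namespace UIDE
variable {ℓ : ℕ}

inductive DSt : Type where
  | q0 | q1 | q2 | dd
deriving DecidableEq

instance : Fintype DSt :=
  ⟨{DSt.q0, DSt.q1, DSt.q2, DSt.dd}, fun x => by cases x <;> simp⟩

abbrev St (ℓ : ℕ) : Type := DSt ⊕ ((Fin ℓ × Bool) ⊕ Fin ℓ)

def dfa : DSt → Al ℓ → DSt
  | .q0, Sum.inl _ => .q1
  | .q0, Sum.inr _ => .dd
  | .q1, Sum.inl _ => .q2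
  | .q1, Sum.inr _ => .dd
  | .q2, Sum.inl _ => .dd
  | .q2, Sum.inr _ => .q1
  | .dd, _ => .dd

def delta (w : List (Al ℓ)) : DSt := w.foldl dfa DSt.q0

/-- The `3ℓ+4`-state NFA recognizing `LL ℓ`. -/
def M1 (ℓ : ℕ) : NFA (Al ℓ) (St ℓ) where
  step q a :=
    match q, a with
    | Sum.inl DSt.q0, Sum.inl x =>
        insert (Sum.inl DSt.q1)
          {s | ∃ k : Fin ℓ, s = Sum.inr (Sum.inl (k, x.val.testBit k.val))}
    | Sum.inl DSt.q0, Sum.inr _ => {Sum.inl DSt.dd}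
    | Sum.inl DSt.q1, Sum.inl _ => {Sum.inl DSt.q2}
    | Sum.inl DSt.q1, Sum.inr _ => {Sum.inl DSt.dd}
    | Sum.inl DSt.q2, Sum.inl _ => {Sum.inl DSt.dd}
    | Sum.inl DSt.q2, Sum.inr _ => {Sum.inl DSt.q1}
    | Sum.inl DSt.dd, _ => {Sum.inl DSt.dd}
    | Sum.inr (Sum.inl (k, b)), Sum.inl y =>
        insert (Sum.inr (Sum.inl (k, b)))
          (if y.val.testBit k.val = b then {Sum.inr (Sum.inr k)} else ∅)
    | Sum.inr (Sum.inl (k, b)), Sum.inr _ => {Sum.inr (Sum.inl (k, b))}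
    | Sum.inr (Sum.inr k), Sum.inr k' => if k' = k then {Sum.inl DSt.dd} else ∅
    | Sum.inr (Sum.inr _), Sum.inl _ => ∅
  start := {Sum.inl DSt.q0}
  accept := {Sum.inl DSt.q0, Sum.inl DSt.q2, Sum.inl DSt.dd}

def Wc (k : Fin ℓ) (b : Bool) (w : List (Al ℓ)) : Prop :=
  ∃ x rest, w = Sum.inl x :: rest ∧ x.val.testBit k.val = b

def Ec (k : Fin ℓ) (w : List (Al ℓ)) : Prop :=
  ∃ (x : Fin (2 ^ ℓ)) (w₁ : List (Al ℓ)) (y : Fin (2 ^ ℓ)),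
    w = Sum.inl x :: (w₁ ++ [Sum.inl y]) ∧ x.val.testBit k.val = y.val.testBit k.val

def Q2 (ℓ : ℕ) : Language (Al ℓ) :=
  {w | ∃ (x : Fin (2 ^ ℓ)) (ps : List (Fin (2 ^ ℓ) × Fin ℓ)) (y : Fin (2 ^ ℓ)),
      w = Sum.inl x :: (ps.flatMap pairF ++ [Sum.inl y])}

/-! basic facts -/

theorem Lp_length {w : List (Al ℓ)} (h : w ∈ Lp ℓ) : 3 ≤ w.length := by
  obtain ⟨x, y, k, w₁, w₂, rfl, -⟩ := h
  simp; omega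

theorem nil_not_Lp : ([] : List (Al ℓ)) ∉ Lp ℓ := fun h => by simpa using Lp_length h

theorem Lpp_ne_nil {w : List (Al ℓ)} (h : w ∈ Lpp ℓ) : w ≠ [] := by
  obtain ⟨x, ps, rfl⟩ := h; simp

theorem Q2_ne_nil {w : List (Al ℓ)} (h : w ∈ Q2 ℓ) : w ≠ [] := by
  obtain ⟨x, ps, y, rfl⟩ := h; simp

theorem flat_len (ps : List (Fin (2 ^ ℓ) × Fin ℓ)) :
    (ps.flatMap pairF).length = 2 * ps.length := by
  induction ps with
  | nil => simp
  | cons p ps ih => simp [pairF, ih]; omega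

theorem not_Lpp_and_Q2 {w : List (Al ℓ)} (h1 : w ∈ Lpp ℓ) (h2 : w ∈ Q2 ℓ) : False := by
  obtain ⟨x, ps, rfl⟩ := h1
  obtain ⟨x', ps', y', heq⟩ := h2
  have := congrArg List.length heq
  rw [List.length_cons, List.length_cons, List.length_append, flat_len, flat_len] at this
  simp at this
  omega

theorem Wc_ne_nil {k : Fin ℓ} {b : Bool} {w : List (Al ℓ)} (h : Wc k b w) : w ≠ [] := by
  obtain ⟨x, rest, rfl, -⟩ := h; simp

theorem Wc_append {k : Fin ℓ} {b : Bool} {w : List (Al ℓ)} (h : Wc k b w) (z : List (Al ℓ)) :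
    Wc k b (w ++ z) := by
  obtain ⟨x, rest, rfl, ht⟩ := h
  exact ⟨x, rest ++ z, by simp, ht⟩

/-! snoc inversion lemmas -/

theorem Wc_snoc {k : Fin ℓ} {b : Bool} {w : List (Al ℓ)} {a : Al ℓ} :
    Wc k b (w ++ [a]) ↔
      (w = [] ∧ ∃ x : Fin (2 ^ ℓ), a = Sum.inl x ∧ x.val.testBit k.val = b) ∨
      (w ≠ [] ∧ Wc k b w) := by
  constructor
  · rintro ⟨x, rest, heq, ht⟩
    cases w with
    | nil =>
      left
      simp only [List.nil_append, List.cons.injEq] at heq  -- [a] = x :: rest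
      exact ⟨rfl, x, heq.1, ht⟩
    | cons c w' =>
      right
      rw [List.cons_append, List.cons.injEq] at heq
      exact ⟨by simp, x, w', by rw [heq.1], ht⟩
  · rintro (⟨rfl, x, rfl, ht⟩ | ⟨hne, h⟩)
    · exact ⟨x, [], rfl, ht⟩
    · exact Wc_append h [a]

theorem Ec_snoc {k : Fin ℓ} {w : List (Al ℓ)} {a : Al ℓ} :
    Ec k (w ++ [a]) ↔
      ∃ y : Fin (2 ^ ℓ), a = Sum.inl y ∧ Wc k (y.val.testBit k.val) w := by
  constructor
  · rintro ⟨x, w₁, y, heq, ht⟩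
    have heq' : w ++ [a] = (Sum.inl x :: w₁) ++ [Sum.inl y] := by simpa using heq
    obtain ⟨h1, h2⟩ := List.append_inj' heq' rfl
    have ha : a = Sum.inl y := by simpa using h2
    exact ⟨y, ha, x, w₁, h1, ht⟩
  · rintro ⟨y, rfl, x, rest, rfl, ht⟩
    exact ⟨x, rest, y, by simp, ht⟩

theorem Lp_snoc {w : List (Al ℓ)} {a : Al ℓ} :
    (w ++ [a]) ∈ Lp ℓ ↔ w ∈ Lp ℓ ∨ ∃ k : Fin ℓ, a = Sum.inr k ∧ Ec k w := by
  constructor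
  · rintro ⟨x, y, k, w₁, w₂, heq, ht⟩
    rcases w₂.eq_nil_or_concat with rfl | ⟨w₂', b, rfl⟩
    · right
      have heq' : w ++ [a] = (Sum.inl x :: (w₁ ++ [Sum.inl y])) ++ [Sum.inr k] := by
        simpa using heq
      obtain ⟨h1, h2⟩ := List.append_inj' heq' rfl
      exact ⟨k, by simpa using h2, x, w₁, y, h1, ht⟩
    · left
      have heq' : w ++ [a]
          = (Sum.inl x :: (w₁ ++ [Sum.inl y, Sum.inr k] ++ w₂')) ++ [b] := by
        simp only [List.concat_eq_append] at heq
        simp only [heq]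
        simp
      obtain ⟨h1, -⟩ := List.append_inj' heq' rfl
      exact ⟨x, y, k, w₁, w₂', h1, ht⟩
  · rintro (⟨x, y, k, w₁, w₂, rfl, ht⟩ | ⟨k, rfl, x, w₁, y, rfl, ht⟩)
    · exact ⟨x, y, k, w₁, w₂ ++ [a], by simp, ht⟩
    · exact ⟨x, y, k, w₁, [], by simp, ht⟩

theorem Lpp_snoc {w : List (Al ℓ)} {a : Al ℓ} :
    (w ++ [a]) ∈ Lpp ℓ ↔
      (w = [] ∧ ∃ x : Fin (2 ^ ℓ), a = Sum.inl x) ∨ (w ∈ Q2 ℓ ∧ ∃ k : Fin ℓ, a = Sum.inr k) := by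
  constructor
  · rintro ⟨x, ps, heq⟩
    rcases ps.eq_nil_or_concat with rfl | ⟨ps', p, rfl⟩
    · left
      have hlen := congrArg List.length heq
      simp at hlen
      have hw : w = [] := by
        cases w with
        | nil => rfl
        | cons c w' => simp at hlen
      subst hw
      simp only [List.nil_append] at heq
      have : a = Sum.inl x := by simpa using heq
      exact ⟨rfl, x, this⟩
    · right
      have heq' : w ++ [a] = (Sum.inl x :: (ps'.flatMap pairF ++ [Sum.inl p.1])) ++ [Sum.inr p.2] := by
        simp only [List.concat_eq_append] at heq
        simp only [heq, List.flatMap_append]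
        simp [pairF]
      obtain ⟨h1, h2⟩ := List.append_inj' heq' rfl
      exact ⟨⟨x, ps', p.1, h1⟩, p.2, by simpa using h2⟩
  · rintro (⟨rfl, x, rfl⟩ | ⟨⟨x, ps, y, rfl⟩, k, rfl⟩)
    · exact ⟨x, [], rfl⟩
    · exact ⟨x, ps ++ [(y, k)], by simp [List.flatMap_append, pairF]⟩

theorem Q2_snoc {w : List (Al ℓ)} {a : Al ℓ} :
    (w ++ [a]) ∈ Q2 ℓ ↔ w ∈ Lpp ℓ ∧ ∃ y : Fin (2 ^ ℓ), a = Sum.inl y := by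
  constructor
  · rintro ⟨x, ps, y, heq⟩
    have heq' : w ++ [a] = (Sum.inl x :: ps.flatMap pairF) ++ [Sum.inl y] := by simpa using heq
    obtain ⟨h1, h2⟩ := List.append_inj' heq' rfl
    exact ⟨⟨x, ps, h1⟩, y, by simpa using h2⟩
  · rintro ⟨⟨x, ps, rfl⟩, y, rfl⟩
    exact ⟨x, ps, y, by simp⟩

/-! the DFA-part characterization -/

theorem delta_char (w : List (Al ℓ)) :
    (delta w = DSt.q0 ↔ w = []) ∧ (delta w = DSt.q1 ↔ w ∈ Lpp ℓ) ∧
    (delta w = DSt.q2 ↔ w ∈ Q2 ℓ) := by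
  induction w using List.reverseRecOn with
  | nil =>
    refine ⟨by simp [delta], ?_, ?_⟩
    · exact iff_of_false (fun h => by cases h) (fun h => absurd rfl (Lpp_ne_nil h))
    · exact iff_of_false (fun h => by cases h) (fun h => absurd rfl (Q2_ne_nil h))
  | append_singleton w a ih =>
    obtain ⟨ih0, ih1, ih2⟩ := ih
    have hd : delta (w ++ [a]) = dfa (delta w) a := by simp [delta, List.foldl_append]
    have hne : (w ++ [a]) ≠ [] := by simp
    rcases hdw : delta w with _ | _ | _ | _
    -- q0 : w = []
    · have hw : w = [] := ih0.1 hdw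
      subst hw
      cases a with
      | inl x =>
        have hval : delta ([Sum.inl x] : List (Al ℓ)) = DSt.q1 := rfl
        refine ⟨iff_of_false (by simp [hval]) hne, iff_of_true hval ⟨x, [], rfl⟩,
          iff_of_false (by simp [hval]) ?_⟩
        intro h
        rcases Q2_snoc.1 h with ⟨hpp, -⟩
        exact absurd rfl (Lpp_ne_nil hpp)
      | inr k =>
        have hval : delta ([Sum.inr k] : List (Al ℓ)) = DSt.dd := rfl
        refine ⟨iff_of_false (by simp [hval]) hne, iff_of_false (by simp [hval]) ?_,
          iff_of_false (by simp [hval]) ?_⟩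
        · intro h
          rcases Lpp_snoc.1 h with ⟨-, x, hx⟩ | ⟨hq2, -⟩
          · exact absurd hx (by simp)
          · exact absurd rfl (Q2_ne_nil hq2)
        · intro h
          rcases Q2_snoc.1 h with ⟨hpp, -⟩
          exact absurd rfl (Lpp_ne_nil hpp)
    -- q1 : w ∈ Lpp
    · have hw : w ∈ Lpp ℓ := ih1.1 hdw
      have hwne : w ≠ [] := Lpp_ne_nil hw
      cases a with
      | inl x =>
        have hval : delta (w ++ [Sum.inl x]) = DSt.q2 := by rw [hd, hdw]; rfl
        refine ⟨iff_of_false (by simp [hval]) hne, iff_of_false (by simp [hval]) ?_,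
          iff_of_true hval (Q2_snoc.2 ⟨hw, x, rfl⟩)⟩
        intro h
        rcases Lpp_snoc.1 h with ⟨h1, -⟩ | ⟨-, k, hk⟩
        · exact hwne h1
        · exact absurd hk (by simp)
      | inr k =>
        have hval : delta (w ++ [Sum.inr k]) = DSt.dd := by rw [hd, hdw]; rfl
        refine ⟨iff_of_false (by simp [hval]) hne, iff_of_false (by simp [hval]) ?_,
          iff_of_false (by simp [hval]) ?_⟩
        · intro h
          rcases Lpp_snoc.1 h with ⟨h1, -⟩ | ⟨hq2, -⟩
          · exact hwne h1
          · exact not_Lpp_and_Q2 hw hq2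
        · intro h
          rcases Q2_snoc.1 h with ⟨-, y, hy⟩
          exact absurd hy (by simp)
    -- q2 : w ∈ Q2
    · have hw : w ∈ Q2 ℓ := ih2.1 hdw
      have hwne : w ≠ [] := Q2_ne_nil hw
      cases a with
      | inl x =>
        have hval : delta (w ++ [Sum.inl x]) = DSt.dd := by rw [hd, hdw]; rfl
        refine ⟨iff_of_false (by simp [hval]) hne, iff_of_false (by simp [hval]) ?_,
          iff_of_false (by simp [hval]) ?_⟩
        · intro h
          rcases Lpp_snoc.1 h with ⟨h1, -⟩ | ⟨-, k, hk⟩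
          · exact hwne h1
          · exact absurd hk (by simp)
        · intro h
          rcases Q2_snoc.1 h with ⟨hpp, -⟩
          exact not_Lpp_and_Q2 hpp hw
      | inr k =>
        have hval : delta (w ++ [Sum.inr k]) = DSt.q1 := by rw [hd, hdw]; rfl
        refine ⟨iff_of_false (by simp [hval]) hne,
          iff_of_true hval (Lpp_snoc.2 (Or.inr ⟨hw, k, rfl⟩)), iff_of_false (by simp [hval]) ?_⟩
        intro h
        rcases Q2_snoc.1 h with ⟨-, y, hy⟩
        exact absurd hy (by simp)
    -- dd
    · have hw1 : w ∉ Lpp ℓ := fun h => by rw [ih1.2 h] at hdw; cases hdw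
      have hw2 : w ∉ Q2 ℓ := fun h => by rw [ih2.2 h] at hdw; cases hdw
      have hw0 : w ≠ [] := fun h => by rw [ih0.2 h] at hdw; cases hdw
      have hval : delta (w ++ [a]) = DSt.dd := by
        rw [hd, hdw]; cases a <;> rfl
      refine ⟨iff_of_false (by simp [hval]) hne, iff_of_false (by simp [hval]) ?_,
        iff_of_false (by simp [hval]) ?_⟩
      · intro h
        rcases Lpp_snoc.1 h with ⟨h1, -⟩ | ⟨hq2, -⟩
        · exact hw0 h1
        · exact hw2 hq2
      · intro h
        rcases Q2_snoc.1 h with ⟨hpp, -⟩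
        exact hw1 hpp

end UIDE

namespace UIDE
variable {ℓ : ℕ}

theorem Ec_ne_nil {k : Fin ℓ} (h : Ec k ([] : List (Al ℓ))) : False := by
  obtain ⟨x, w₁, y, heq, -⟩ := h
  simp at heq

def EP (w : List (Al ℓ)) : St ℓ → Prop
  | Sum.inl d => delta w = d ∨ (d = DSt.dd ∧ w ∈ Lp ℓ)
  | Sum.inr (Sum.inl (k, b)) => Wc k b w
  | Sum.inr (Sum.inr k) => Ec k w

theorem M1_eval (w : List (Al ℓ)) : (M1 ℓ).eval w = {s | EP w s} := by
  induction w using List.reverseRecOn with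
  | nil =>
    ext s
    show s ∈ ({Sum.inl DSt.q0} : Set (St ℓ)) ↔ EP [] s
    rcases s with d | kb | k
    · rw [Set.mem_singleton_iff]
      show _ ↔ delta [] = d ∨ (d = DSt.dd ∧ [] ∈ Lp ℓ)
      constructor
      · intro h
        have hd : d = DSt.q0 := Sum.inl.inj h
        exact Or.inl (by rw [hd]; rfl)
      · rintro (h | ⟨-, h⟩)
        · rw [show d = DSt.q0 from h.symm.trans rfl]
        · exact absurd h nil_not_Lp
    · rcases kb with ⟨k, b⟩
      rw [Set.mem_singleton_iff]
      show _ ↔ Wc k b []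
      exact iff_of_false (by simp) (fun h => Wc_ne_nil h rfl)
    · rw [Set.mem_singleton_iff]
      show _ ↔ Ec k []
      exact iff_of_false (by simp) Ec_ne_nil
  | append_singleton w a ih =>
    rw [NFA.eval_append_singleton, ih]
    have hd : delta (w ++ [a]) = dfa (delta w) a := by simp [delta, List.foldl_append]
    ext s
    rw [NFA.mem_stepSet]
    constructor
    · rintro ⟨q, hq, hs⟩
      rcases q with d | ⟨⟨k, b⟩⟩ | k
      · -- q = inl d
        have hq' : delta w = d ∨ (d = DSt.dd ∧ w ∈ Lp ℓ) := hq
        cases d with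
        | q0 =>
          have hdw : delta w = DSt.q0 := by
            rcases hq' with h | ⟨h, -⟩
            · exact h
            · exact absurd h (by simp)
          have hwnil : w = [] := ((delta_char w).1).1 hdw
          cases a with
          | inl x =>
            have hstep : (M1 ℓ).step (Sum.inl DSt.q0) (Sum.inl x)
                = insert (Sum.inl DSt.q1)
                  {s | ∃ k : Fin ℓ, s = Sum.inr (Sum.inl (k, x.val.testBit k.val))} := rfl
            rw [hstep, Set.mem_insert_iff] at hs
            rcases hs with rfl | ⟨k, rfl⟩
            · exact Or.inl (by rw [hd, hdw]; rfl)
            · show Wc k (x.val.testBit k.val) (w ++ [Sum.inl x])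
              subst hwnil
              exact ⟨x, [], rfl, rfl⟩
          | inr k =>
            have hstep : (M1 ℓ).step (Sum.inl DSt.q0) (Sum.inr k)
                = {Sum.inl DSt.dd} := rfl
            rw [hstep, Set.mem_singleton_iff] at hs
            subst hs
            exact Or.inl (by rw [hd, hdw]; rfl)
        | q1 =>
          have hdw : delta w = DSt.q1 := by
            rcases hq' with h | ⟨h, -⟩
            · exact h
            · exact absurd h (by simp)
          cases a with
          | inl x =>
            have hstep : (M1 ℓ).step (Sum.inl DSt.q1) (Sum.inl x)
                = {Sum.inl DSt.q2} := rfl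
            rw [hstep, Set.mem_singleton_iff] at hs
            subst hs
            exact Or.inl (by rw [hd, hdw]; rfl)
          | inr k =>
            have hstep : (M1 ℓ).step (Sum.inl DSt.q1) (Sum.inr k)
                = {Sum.inl DSt.dd} := rfl
            rw [hstep, Set.mem_singleton_iff] at hs
            subst hs
            exact Or.inl (by rw [hd, hdw]; rfl)
        | q2 =>
          have hdw : delta w = DSt.q2 := by
            rcases hq' with h | ⟨h, -⟩
            · exact h
            · exact absurd h (by simp)
          cases a with
          | inl x =>
            have hstep : (M1 ℓ).step (Sum.inl DSt.q2) (Sum.inl x)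
                = {Sum.inl DSt.dd} := rfl
            rw [hstep, Set.mem_singleton_iff] at hs
            subst hs
            exact Or.inl (by rw [hd, hdw]; rfl)
          | inr k =>
            have hstep : (M1 ℓ).step (Sum.inl DSt.q2) (Sum.inr k)
                = {Sum.inl DSt.q1} := rfl
            rw [hstep, Set.mem_singleton_iff] at hs
            subst hs
            exact Or.inl (by rw [hd, hdw]; rfl)
        | dd =>
          have hstep : (M1 ℓ).step (Sum.inl DSt.dd) a = {Sum.inl DSt.dd} := by
            cases a <;> rfl
          rw [hstep, Set.mem_singleton_iff] at hs
          subst hs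
          rcases hq' with h | ⟨-, h⟩
          · exact Or.inl (by rw [hd, h]; cases a <;> rfl)
          · exact Or.inr ⟨rfl, Lp_snoc.2 (Or.inl h)⟩
      · -- q = inr (inl (k, b)) : waiting state
        have hq' : Wc k b w := hq
        cases a with
        | inl y =>
          have hstep : (M1 ℓ).step (Sum.inr (Sum.inl (k, b))) (Sum.inl y)
              = insert (Sum.inr (Sum.inl (k, b)))
                (if y.val.testBit k.val = b then {Sum.inr (Sum.inr k)} else ∅) := rfl
          rw [hstep, Set.mem_insert_iff] at hs
          rcases hs with rfl | hs
          · exact Wc_append hq' _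
          · by_cases hb : y.val.testBit k.val = b
            · rw [if_pos hb, Set.mem_singleton_iff] at hs
              subst hs
              show Ec k (w ++ [Sum.inl y])
              refine Ec_snoc.2 ⟨y, rfl, ?_⟩
              rwa [hb]
            · rw [if_neg hb] at hs
              exact absurd hs (Set.notMem_empty s)
        | inr k' =>
          have hstep : (M1 ℓ).step (Sum.inr (Sum.inl (k, b))) (Sum.inr k')
              = {Sum.inr (Sum.inl (k, b))} := rfl
          rw [hstep, Set.mem_singleton_iff] at hs
          subst hs
          exact Wc_append hq' _
      · -- q = inr (inr k) : expecting state
        have hq' : Ec k w := hq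
        cases a with
        | inl y =>
          have hstep : (M1 ℓ).step (Sum.inr (Sum.inr k)) (Sum.inl y) = (∅ : Set (St ℓ)) := rfl
          rw [hstep] at hs
          exact absurd hs (Set.notMem_empty s)
        | inr k' =>
          have hstep : (M1 ℓ).step (Sum.inr (Sum.inr k)) (Sum.inr k')
              = if k' = k then {Sum.inl DSt.dd} else ∅ := rfl
          rw [hstep] at hs
          by_cases hk : k' = k
          · rw [if_pos hk, Set.mem_singleton_iff] at hs
            subst hs
            subst hk
            exact Or.inr ⟨rfl, Lp_snoc.2 (Or.inr ⟨k', rfl, hq'⟩)⟩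
          · rw [if_neg hk] at hs
            exact absurd hs (Set.notMem_empty s)
    · -- backward direction
      intro h
      rcases s with d | ⟨⟨k, b⟩⟩ | k
      · have h' : delta (w ++ [a]) = d ∨ (d = DSt.dd ∧ (w ++ [a]) ∈ Lp ℓ) := h
        rcases h' with rfl | ⟨rfl, hlp⟩
        · refine ⟨Sum.inl (delta w), Or.inl rfl, ?_⟩
          rw [hd]
          rcases hdw : delta w with _ | _ | _ | _ <;> cases a <;>
            simp [M1, dfa, Set.mem_insert_iff]
        · rcases Lp_snoc.1 hlp with hw | ⟨k, rfl, hec⟩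
          · exact ⟨Sum.inl DSt.dd, Or.inr ⟨rfl, hw⟩, by cases a <;> exact rfl⟩
          · refine ⟨Sum.inr (Sum.inr k), hec, ?_⟩
            show Sum.inl DSt.dd ∈ (M1 ℓ).step (Sum.inr (Sum.inr k)) (Sum.inr k)
            have hstep : (M1 ℓ).step (Sum.inr (Sum.inr k)) (Sum.inr k)
                = if k = k then {Sum.inl DSt.dd} else ∅ := rfl
            rw [hstep, if_pos rfl]
            rfl
      · have h' : Wc k b (w ++ [a]) := h
        rcases Wc_snoc.1 h' with ⟨rfl, x, rfl, hb⟩ | ⟨hne, hw⟩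
        · refine ⟨Sum.inl DSt.q0, Or.inl rfl, ?_⟩
          have hstep : (M1 ℓ).step (Sum.inl DSt.q0) (Sum.inl x)
              = insert (Sum.inl DSt.q1)
                {s | ∃ k : Fin ℓ, s = Sum.inr (Sum.inl (k, x.val.testBit k.val))} := rfl
          rw [hstep, Set.mem_insert_iff]
          exact Or.inr ⟨k, by rw [hb]⟩
        · refine ⟨Sum.inr (Sum.inl (k, b)), hw, ?_⟩
          cases a with
          | inl y =>
            have hstep : (M1 ℓ).step (Sum.inr (Sum.inl (k, b))) (Sum.inl y)
                = insert (Sum.inr (Sum.inl (k, b)))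
                  (if y.val.testBit k.val = b then {Sum.inr (Sum.inr k)} else ∅) := rfl
            rw [hstep, Set.mem_insert_iff]
            exact Or.inl rfl
          | inr k' => exact rfl
      · have h' : Ec k (w ++ [a]) := h
        rcases Ec_snoc.1 h' with ⟨y, rfl, hw⟩
        refine ⟨Sum.inr (Sum.inl (k, y.val.testBit k.val)), hw, ?_⟩
        have hstep : (M1 ℓ).step (Sum.inr (Sum.inl (k, y.val.testBit k.val))) (Sum.inl y)
            = insert (Sum.inr (Sum.inl (k, y.val.testBit k.val)))
              (if y.val.testBit k.val = y.val.testBit k.val then {Sum.inr (Sum.inr k)} else ∅) := rfl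
        rw [hstep, Set.mem_insert_iff, if_pos rfl]
        exact Or.inr rfl

end UIDE

namespace UIDE
variable {ℓ : ℕ}

theorem M1_accepts : (M1 ℓ).accepts = LL ℓ := by
  ext w
  rw [NFA.mem_accepts]
  have he : (M1 ℓ).evalFrom (M1 ℓ).start w = {s | EP w s} := M1_eval w
  rw [he]
  show (∃ S ∈ ({Sum.inl DSt.q0, Sum.inl DSt.q2, Sum.inl DSt.dd} : Set (St ℓ)),
      S ∈ {s | EP w s}) ↔ (w ∈ Lp ℓ ∨ w ∉ Lpp ℓ)
  constructor
  · rintro ⟨S, hS, hmem⟩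
    simp only [Set.mem_insert_iff, Set.mem_singleton_iff] at hS
    rcases hS with rfl | rfl | rfl
    · have h' : delta w = DSt.q0 ∨ (DSt.q0 = DSt.dd ∧ w ∈ Lp ℓ) := hmem
      rcases h' with h | ⟨h, -⟩
      · right
        intro hpp
        rw [(delta_char w).2.1.2 hpp] at h
        cases h
      · exact absurd h (by simp)
    · have h' : delta w = DSt.q2 ∨ (DSt.q2 = DSt.dd ∧ w ∈ Lp ℓ) := hmem
      rcases h' with h | ⟨h, -⟩
      · exact Or.inr fun hpp => not_Lpp_and_Q2 hpp ((delta_char w).2.2.1 h)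
      · exact absurd h (by simp)
    · have h' : delta w = DSt.dd ∨ (DSt.dd = DSt.dd ∧ w ∈ Lp ℓ) := hmem
      rcases h' with h | ⟨-, h⟩
      · right
        intro hpp
        rw [(delta_char w).2.1.2 hpp] at h
        cases h
      · exact Or.inl h
  · rintro (hlp | hnpp)
    · exact ⟨Sum.inl DSt.dd, by simp, Or.inr ⟨rfl, hlp⟩⟩
    · rcases hdw : delta w with _ | _ | _ | _
      · exact ⟨Sum.inl DSt.q0, by simp, Or.inl hdw⟩
      · exact absurd ((delta_char w).2.1.1 hdw) hnpp
      · exact ⟨Sum.inl DSt.q2, by simp, Or.inl hdw⟩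
      · exact ⟨Sum.inl DSt.dd, by simp, Or.inl hdw⟩

theorem card_DSt : Fintype.card DSt = 4 := by decide

theorem card_St : Fintype.card (St ℓ) = 3 * ℓ + 4 := by
  simp only [St, Fintype.card_sum, Fintype.card_prod, Fintype.card_fin, card_DSt,
    Fintype.card_bool]
  omega

end UIDE

/-- Doubly-exponential lower bound for upward interiors: for `n ≥ 7` and
`ℓ = ⌊(n-4)/3⌋`, over `Σ = Γ ⊕ Υ` with `Γ = Fin (2^ℓ)` and `Υ = Fin ℓ`, the
language `L_n = L'_n ∪ (Σ* \ L''_n)` (where `L'_n` requires the initial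
`Γ`-letter to share, with some later `Γ`-letter, the bit indicated by the
`Υ`-letter that follows it, and `L''_n = Γ·(Γ·Υ)*`) satisfies `nN(L_n) ≤ n` and
`nN(↑int L_n) ≥ 2^(2^ℓ) + 1`. -/
theorem upInterior_doubly_exponential (n : ℕ) (hn : 7 ≤ n) (ℓ : ℕ)
    (hℓ : ℓ = (n - 4) / 3)
    (L' L'' L : Language (Fin (2 ^ ℓ) ⊕ Fin ℓ))
    (hL' : L' = {w | ∃ (x y : Fin (2 ^ ℓ)) (k : Fin ℓ)
        (w₁ w₂ : List (Fin (2 ^ ℓ) ⊕ Fin ℓ)),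
        w = Sum.inl x :: (w₁ ++ [Sum.inl y, Sum.inr k] ++ w₂) ∧
        Nat.testBit x.val k.val = Nat.testBit y.val k.val})
    (hL'' : L'' = {w | ∃ (x : Fin (2 ^ ℓ)) (ps : List (Fin (2 ^ ℓ) × Fin ℓ)),
        w = Sum.inl x :: ps.flatMap (fun p => [Sum.inl p.1, Sum.inr p.2])})
    (hL : L = {w | w ∈ L' ∨ w ∉ L''}) :
    nN L ≤ n ∧ 2 ^ 2 ^ ℓ + 1 ≤ nN (upInterior L) := by
  subst hL' hL''
  subst hL
  have hl : 0 < ℓ := by omega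
  have hn' : 3 * ℓ + 4 ≤ n := by omega
  constructor
  · have hmem : (3 * ℓ + 4) ∈ {m | ∃ (σ : Type) (inst : Fintype σ) (M : NFA (UIDE.Al ℓ) σ),
        @Fintype.card σ inst = m ∧ M.accepts = UIDE.LL ℓ} :=
      ⟨UIDE.St ℓ, inferInstance, UIDE.M1 ℓ, UIDE.card_St, UIDE.M1_accepts⟩
    exact le_trans (Nat.sInf_le hmem) hn'
  · show 2 ^ 2 ^ ℓ + 1 ≤ nN (upInterior (UIDE.LL ℓ))
    rw [UIDE.upInterior_LL hl]
    apply le_csInf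
    · exact ⟨2 ^ 2 ^ ℓ + 1, Option (Finset (Fin (2 ^ ℓ))), inferInstance, UIDE.M2 ℓ,
        UIDE.card_M2_states, UIDE.M2_accepts⟩
    · rintro m ⟨σ, inst, M, rfl, hM⟩
      exact UIDE.lower_bound M hM
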